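/- Let k_1, k_2, k_3 ≥ 1 and let E_1, E'_1 ∈ M_{k_1×k_2}(L), E_2, E'_2 ∈ M_{k_1×k_3}(L), E_3, E'_3 ∈ M_{k_2×k_3}(L). Let N (respectively N') be the (k_1+k_2+k_3)×(k_1+k_2+k_3) block matrix [[0, E_1, E_2],[0, 0, E_3],[0, 0, 0]] (respectively with E'_i in place of E_i), and let A ∈ GL_{k_1}(L), B ∈ GL_{k_2}(L), C ∈ GL_{k_3}(L), U = diag(A, B, C). Set g = U(I+N), g' = U(I+N'). Then g · GL_{k_1+k_2+k_3}(𝒪_L) = g' · GL_{k_1+k_2+k_3}(𝒪_L) if and only if all three matrices E'_1 − E_1, E'_3 − E_3, and E'_2 − E_2 − E_1 E'_3 + E_1 E_3 have all entries in 𝒪_L. -/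

import Mathlib

open Matrix

/-- Coset criterion for 3-block upper unipotent parametrizations:
`U(I+N)·K = U(I+N')·K` iff `E'_1 − E_1`, `E'_3 − E_3` and `E'_2 − E_2 − E_1E'_3 + E_1E_3`
all have entries in `𝒪_L`. -/
theorem stmt_3 {L : Type*} [Field L] (v : L → ℤ) (t : L)
    (hv_mul : ∀ x y : L, x ≠ 0 → y ≠ 0 → v (x * y) = v x + v y)
    (hv_add : ∀ x y : L, x ≠ 0 → y ≠ 0 → x + y ≠ 0 → min (v x) (v y) ≤ v (x + y))
    (hv_surj : ∀ n : ℤ, ∃ x : L, x ≠ 0 ∧ v x = n)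
    (ht0 : t ≠ 0) (ht1 : v t = 1)
    (O : Subring L) (hO : ∀ x : L, x ∈ O ↔ x = 0 ∨ 0 ≤ v x)
    (k₁ k₂ k₃ : ℕ) (hk₁ : 1 ≤ k₁) (hk₂ : 1 ≤ k₂) (hk₃ : 1 ≤ k₃)
    (E₁ E₁' : Matrix (Fin k₁) (Fin k₂) L)
    (E₂ E₂' : Matrix (Fin k₁) (Fin k₃) L)
    (E₃ E₃' : Matrix (Fin k₂) (Fin k₃) L)
    (A : Matrix (Fin k₁) (Fin k₁) L) (hA : IsUnit A.det)
    (B : Matrix (Fin k₂) (Fin k₂) L) (hB : IsUnit B.det)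
    (C : Matrix (Fin k₃) (Fin k₃) L) (hC : IsUnit C.det)
    (U : Matrix (Fin k₁ ⊕ (Fin k₂ ⊕ Fin k₃)) (Fin k₁ ⊕ (Fin k₂ ⊕ Fin k₃)) L)
    (hU : U = Matrix.fromBlocks A 0 0 (Matrix.fromBlocks B 0 0 C))
    (N N' : Matrix (Fin k₁ ⊕ (Fin k₂ ⊕ Fin k₃)) (Fin k₁ ⊕ (Fin k₂ ⊕ Fin k₃)) L)
    (hN : N = Matrix.fromBlocks 0 (Matrix.fromCols E₁ E₂) 0 (Matrix.fromBlocks 0 E₃ 0 0))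
    (hN' : N' = Matrix.fromBlocks 0 (Matrix.fromCols E₁' E₂') 0
        (Matrix.fromBlocks 0 E₃' 0 0)) :
    (∃ k : Matrix (Fin k₁ ⊕ (Fin k₂ ⊕ Fin k₃)) (Fin k₁ ⊕ (Fin k₂ ⊕ Fin k₃)) O,
        IsUnit k.det ∧ (U * (1 + N)) * k.map (fun x => (x : L)) = U * (1 + N'))
      ↔ ((∀ i j, (E₁' - E₁) i j ∈ O) ∧ (∀ i j, (E₃' - E₃) i j ∈ O) ∧
          (∀ i j, (E₂' - E₂ - E₁ * E₃' + E₁ * E₃) i j ∈ O)) := by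
  -- the unique candidate for k over L
  set M : Matrix (Fin k₁ ⊕ (Fin k₂ ⊕ Fin k₃)) (Fin k₁ ⊕ (Fin k₂ ⊕ Fin k₃)) L :=
    1 + N' - N - N * N' + N * N with hMdef
  have hMblock : M =
      Matrix.fromBlocks 1 (Matrix.fromCols (E₁' - E₁) (E₂' - E₂ - E₁ * E₃' + E₁ * E₃)) 0
        (Matrix.fromBlocks 1 (E₃' - E₃) 0 1) := by
    rw [hMdef, hN, hN']
    ext i j
    rcases i with i | i | i <;> rcases j with j | j | j <;>
      simp [Matrix.mul_apply, Fintype.sum_sum_type, Matrix.one_apply, Matrix.sub_apply,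
        Matrix.add_apply, Finset.sum_sub_distrib]
  have hNNN : N * N * N = 0 := by
    subst hN
    ext i j
    rcases i with i | i | i <;> rcases j with j | j | j <;>
      simp [Matrix.mul_apply, Fintype.sum_sum_type, Finset.mul_sum, Finset.sum_mul]
  have hNNN' : N * N * N' = 0 := by
    rw [hN, hN']
    ext i j
    rcases i with i | i | i <;> rcases j with j | j | j <;>
      simp [Matrix.mul_apply, Fintype.sum_sum_type, Finset.mul_sum, Finset.sum_mul]
  have hM : (1 + N) * M = 1 + N' := by
    have : (1 + N) * M = 1 + N' - N * N * N' + N * N * N := by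
      rw [hMdef]; noncomm_ring
    rw [this, hNNN, hNNN']; simp
  have hP : (1 - N + N * N) * (1 + N) = 1 := by
    have : (1 - N + N * N) * (1 + N) = 1 + N * N * N := by noncomm_ring
    rw [this, hNNN]; simp
  -- U is invertible
  have hUdet : IsUnit U.det := by
    rw [hU, Matrix.det_fromBlocks_zero₂₁, Matrix.det_fromBlocks_zero₂₁]
    exact hA.mul (hB.mul hC)
  have hUinv : Invertible U := U.invertibleOfIsUnitDet hUdet
  -- det M = 1
  have hdetM : M.det = 1 := by
    rw [hMblock, Matrix.det_fromBlocks_zero₂₁, Matrix.det_fromBlocks_zero₂₁]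
    simp
  constructor
  · rintro ⟨k, hkdet, hkeq⟩
    -- k.map = M
    have hkM : k.map (fun x => (x : L)) = M := by
      have h1 : U * ((1 + N) * k.map (fun x => (x : L))) = U * ((1 + N) * M) := by
        rw [hM, ← mul_assoc, hkeq]
      have h2 : (1 + N) * k.map (fun x => (x : L)) = (1 + N) * M :=
        (Matrix.mul_right_injective_of_invertible U) h1
      calc k.map (fun x => (x : L))
          = ((1 - N + N * N) * (1 + N)) * k.map (fun x => (x : L)) := by rw [hP, one_mul]
        _ = (1 - N + N * N) * ((1 + N) * k.map (fun x => (x : L))) := by rw [mul_assoc]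
        _ = (1 - N + N * N) * ((1 + N) * M) := by rw [h2]
        _ = ((1 - N + N * N) * (1 + N)) * M := by rw [mul_assoc]
        _ = M := by rw [hP, one_mul]
    have hmem : ∀ i j, M i j ∈ O := by
      intro i j
      rw [← hkM]
      exact (k i j).2
    refine ⟨fun i j => ?_, fun i j => ?_, fun i j => ?_⟩
    · have := hmem (Sum.inl i) (Sum.inr (Sum.inl j))
      rwa [hMblock, Matrix.fromBlocks_apply₁₂, Matrix.fromCols_apply_inl] at this
    · have := hmem (Sum.inr (Sum.inl i)) (Sum.inr (Sum.inr j))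
      rwa [hMblock, Matrix.fromBlocks_apply₂₂, Matrix.fromBlocks_apply₁₂] at this
    · have := hmem (Sum.inl i) (Sum.inr (Sum.inr j))
      rwa [hMblock, Matrix.fromBlocks_apply₁₂, Matrix.fromCols_apply_inr] at this
  · rintro ⟨h1, h3, h2⟩
    have hmem : ∀ i j, M i j ∈ O := by
      intro i j
      rw [hMblock]
      rcases i with i | i | i <;> rcases j with j | j | j <;>
        simp only [Matrix.fromBlocks_apply₁₁, Matrix.fromBlocks_apply₁₂,
          Matrix.fromBlocks_apply₂₁, Matrix.fromBlocks_apply₂₂, Matrix.fromCols_apply_inl,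
          Matrix.fromCols_apply_inr, Matrix.one_apply, Matrix.zero_apply] <;>
        first
          | exact h1 i j
          | exact h2 i j
          | exact h3 i j
          | exact zero_mem O
          | (split <;> first | exact one_mem O | exact zero_mem O)
    set k0 : Matrix (Fin k₁ ⊕ (Fin k₂ ⊕ Fin k₃)) (Fin k₁ ⊕ (Fin k₂ ⊕ Fin k₃)) O :=
      Matrix.of fun i j => (⟨M i j, hmem i j⟩ : O) with hk0
    have hmap : k0.map (fun x : O => (x : L)) = M := by ext i j; rfl
    have hcoe : ((k0.det : O) : L) = 1 := by
      have h := RingHom.map_det O.subtype k0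
      rw [show (O.subtype.mapMatrix k0) = k0.map (fun x : O => (x : L)) from rfl, hmap,
        hdetM] at h
      exact h
    have hdet1 : k0.det = 1 := Subtype.coe_injective (by simpa using hcoe)
    exact ⟨k0, by rw [hdet1]; exact isUnit_one, by rw [hmap, mul_assoc, hM]⟩
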